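/- Let n be a natural number with n ≥ 1. The complete bipartite graph K_{n,n} is decomposable into commuting perfect matchings — that is, its edge set can be partitioned into perfect matchings whose adjacency matrices pairwise commute — if and only if n is a power of 2. -/

import Mathlib

open Matrix
open scoped Classical

namespace Stmt12Aux

variable {m n : ℕ}

abbrev G2 (m : ℕ) := Fin m → ZMod 2

lemma add_self (a : G2 m) : a + a = 0 := by
  funext i; exact (by decide : ∀ x : ZMod 2, x + x = 0) (a i)

lemma eq_iff_add_eq_zero (x y : G2 m) : x = y ↔ x + y = 0 := by
  constructor
  · rintro rfl; exact add_self _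
  · intro h
    calc x = x + (y + y) := by rw [add_self, add_zero]
    _ = (x + y) + y := by rw [add_assoc]
    _ = y := by rw [h, zero_add]

lemma swap_eq {u v a : G2 m} : v = u + a ↔ u = v + a := by
  constructor <;> rintro rfl <;> rw [add_assoc, add_self, add_zero]

lemma key_swap' (u v a b : G2 m) (h : u + a = v + b) : u + b = v + a := by
  have e1 : u + b = (u + a) + (a + b) := by
    rw [show (u+a)+(a+b) = u + b + (a+a) from by abel, add_self, add_zero]
  rw [e1, h, show (v+b)+(a+b) = v + a + (b+b) from by abel, add_self, add_zero]

lemma key_swap (u v a b : G2 m) : u + a = v + b ↔ u + b = v + a :=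
  ⟨key_swap' u v a b, key_swap' u v b a⟩

def Mg (e : Fin n ≃ G2 m) (a : G2 m) : SimpleGraph (Fin n ⊕ Fin n) where
  Adj u v := match u, v with
    | .inl x, .inr y => e y = e x + a
    | .inr y, .inl x => e y = e x + a
    | _, _ => False
  symm := ⟨by rintro (x|x) (y|y) h <;> exact h⟩
  loopless := ⟨by rintro (x|x) h <;> exact h⟩

variable (e : Fin n ≃ G2 m) (a b : G2 m)

@[simp] lemma Mg_adj_inl_inr (x y : Fin n) :
    (Mg e a).Adj (.inl x) (.inr y) ↔ e y = e x + a := Iff.rfl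
@[simp] lemma Mg_adj_inr_inl (x y : Fin n) :
    (Mg e a).Adj (.inr y) (.inl x) ↔ e y = e x + a := Iff.rfl
@[simp] lemma Mg_adj_inl_inl (x y : Fin n) :
    ¬ (Mg e a).Adj (.inl x) (.inl y) := fun h => h
@[simp] lemma Mg_adj_inr_inr (x y : Fin n) :
    ¬ (Mg e a).Adj (.inr x) (.inr y) := fun h => h

lemma Mg_le : Mg e a ≤ completeBipartiteGraph (Fin n) (Fin n) := by
  rintro (x|x) (y|y) h <;> simp_all

lemma Mg_matching : ∀ v, ∃! w, (Mg e a).Adj v w := by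
  rintro (x|y)
  · refine ⟨.inr (e.symm (e x + a)), by simp, ?_⟩
    rintro (z|z) h
    · exact absurd h (Mg_adj_inl_inl e a x z)
    · simp only [Mg_adj_inl_inr] at h
      simp [← h]
  · refine ⟨.inl (e.symm (e y + a)), by simp [swap_eq], ?_⟩
    rintro (z|z) h
    · rw [show (Mg e a).Adj (.inr y) (.inl z) ↔ e y = e z + a from Iff.rfl, swap_eq] at h
      simp [← h]
    · exact absurd h (Mg_adj_inr_inr e a y z)

lemma sum_indicator (p q : G2 m) :
    ∑ z : Fin n, (if e z = p then (1:ℝ) else 0) * (if e z = q then 1 else 0)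
      = if p = q then 1 else 0 := by
  rw [← Equiv.sum_comp e.symm
    (fun z => (if e z = p then (1:ℝ) else 0) * (if e z = q then 1 else 0))]
  simp only [Equiv.apply_symm_apply]
  have h : ∀ w : G2 m, (if w = p then (1:ℝ) else 0) * (if w = q then 1 else 0)
      = if w = p then (if p = q then (1:ℝ) else 0) else 0 := by
    intro w
    split_ifs with h1 h2 h3 h3 <;> simp_all
  simp only [h]
  rw [Finset.sum_ite_eq' Finset.univ p]
  simp

lemma Mg_commute : Commute ((Mg e a).adjMatrix ℝ) ((Mg e b).adjMatrix ℝ) := by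
  unfold Commute SemiconjBy
  ext u v
  rcases u with x|x <;> rcases v with y|y <;>
    simp only [Matrix.mul_apply, Fintype.sum_sum_type, SimpleGraph.adjMatrix_apply,
      Mg_adj_inl_inr, Mg_adj_inr_inl, Mg_adj_inl_inl, Mg_adj_inr_inr, if_false,
      ite_eq_right_iff, zero_mul, mul_zero, Finset.sum_const_zero, add_zero, zero_add]
  · rw [sum_indicator, sum_indicator, if_congr (key_swap (e x) (e y) a b) rfl rfl]
  · simp only [show ∀ z, ((e x = e z + a) ↔ (e z = e x + a)) from fun z => swap_eq,
      show ∀ z, ((e y = e z + b) ↔ (e z = e y + b)) from fun z => swap_eq,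
      show ∀ z, ((e x = e z + b) ↔ (e z = e x + b)) from fun z => swap_eq,
      show ∀ z, ((e y = e z + a) ↔ (e z = e y + a)) from fun z => swap_eq]
    rw [sum_indicator, sum_indicator, if_congr (key_swap (e x) (e y) a b) rfl rfl]

lemma decomposable_of_pow (n m : ℕ) (hcard : n = 2 ^ m) :
    ∃ (k : ℕ) (M : Fin k → SimpleGraph (Fin n ⊕ Fin n)),
    (∀ i, M i ≤ completeBipartiteGraph (Fin n) (Fin n)) ∧
    (∀ i, ∀ v, ∃! w, (M i).Adj v w) ∧
    (∀ i j, i ≠ j → Disjoint (M i).edgeSet (M j).edgeSet) ∧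
    (⋃ i, (M i).edgeSet) = (completeBipartiteGraph (Fin n) (Fin n)).edgeSet ∧
    (∀ i j, Commute ((M i).adjMatrix ℝ) ((M j).adjMatrix ℝ)) := by
  have hc : Fintype.card (Fin n) = Fintype.card (G2 m) := by
    simp [hcard, G2]
  let e : Fin n ≃ G2 m := Fintype.equivOfCardEq hc
  refine ⟨n, fun i => Mg e (e i), fun i => Mg_le e (e i), fun i => Mg_matching e (e i),
    ?_, ?_, fun i j => Mg_commute e (e i) (e j)⟩
  · intro i j hij
    rw [Set.disjoint_left]
    intro s hs hs'
    induction s using Sym2.ind with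
    | _ u v =>
      rw [SimpleGraph.mem_edgeSet] at hs hs'
      rcases u with x|x <;> rcases v with y|y
      · exact Mg_adj_inl_inl e (e i) x y hs
      · exact hij (e.injective (by
          rw [Mg_adj_inl_inr] at hs hs'
          have := hs.symm.trans hs'
          exact add_left_cancel this))
      · exact hij (e.injective (by
          rw [Mg_adj_inr_inl] at hs hs'
          have := hs.symm.trans hs'
          exact add_left_cancel this))
      · exact Mg_adj_inr_inr e (e i) x y hs
  · ext s
    induction s using Sym2.ind with
    | _ u v =>
      simp only [Set.mem_iUnion, SimpleGraph.mem_edgeSet]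
      rcases u with x|x <;> rcases v with y|y
      · simp
      · simp only [Mg_adj_inl_inr, completeBipartiteGraph_adj]
        constructor
        · intro _; simp
        · intro _
          exact ⟨e.symm (e y - e x), by rw [Equiv.apply_symm_apply]; abel⟩
      · simp only [Mg_adj_inr_inl, completeBipartiteGraph_adj]
        constructor
        · intro _; simp
        · intro _
          exact ⟨e.symm (e x - e y), by rw [Equiv.apply_symm_apply]; abel⟩
      · simp


lemma iff_of_ite_eq {P Q : Prop} [Decidable P] [Decidable Q]
    (h : (if P then (1:ℝ) else 0) = (if Q then 1 else 0)) : P ↔ Q := by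
  split_ifs at h with h1 h2 <;> simp_all

lemma pow_of_decomposable (n : ℕ) (hn : 1 ≤ n)
    (k : ℕ) (M : Fin k → SimpleGraph (Fin n ⊕ Fin n))
    (hle : ∀ i, M i ≤ completeBipartiteGraph (Fin n) (Fin n))
    (huniq : ∀ i, ∀ v, ∃! w, (M i).Adj v w)
    (hunion : (⋃ i, (M i).edgeSet) = (completeBipartiteGraph (Fin n) (Fin n)).edgeSet)
    (hcomm : ∀ i j, Commute ((M i).adjMatrix ℝ) ((M j).adjMatrix ℝ)) :
    ∃ m : ℕ, n = 2 ^ m := by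
  -- no same-side adjacencies
  have hll : ∀ i (x y : Fin n), ¬ (M i).Adj (.inl x) (.inl y) := by
    intro i x y h
    have := hle i h
    simp at this
  have hrr : ∀ i (x y : Fin n), ¬ (M i).Adj (.inr x) (.inr y) := by
    intro i x y h
    have := hle i h
    simp at this
  -- unique cross partners
  have hEx : ∀ i (x : Fin n), ∃! y : Fin n, (M i).Adj (.inl x) (.inr y) := by
    intro i x
    obtain ⟨w, hw, hu⟩ := huniq i (.inl x)
    rcases w with x'|y
    · exact absurd hw (hll i x x')
    · exact ⟨y, hw, fun y' hy' => by simpa using hu _ hy'⟩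
  have hEx' : ∀ i (y : Fin n), ∃! x : Fin n, (M i).Adj (.inl x) (.inr y) := by
    intro i y
    obtain ⟨w, hw, hu⟩ := huniq i (.inr y)
    rcases w with x|y'
    · exact ⟨x, hw.symm, fun x' hx' => by simpa using hu _ hx'.symm⟩
    · exact absurd hw (hrr i y y')
  let σ : Fin k → Equiv.Perm (Fin n) := fun i =>
    { toFun := fun x => (hEx i x).choose
      invFun := fun y => (hEx' i y).choose
      left_inv := fun x =>
        ((hEx' i ((hEx i x).choose)).choose_spec.2 x (hEx i x).choose_spec.1).symm
      right_inv := fun y =>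
        ((hEx i ((hEx' i y).choose)).choose_spec.2 y (hEx' i y).choose_spec.1).symm }
  have hadj : ∀ i (x y : Fin n), (M i).Adj (.inl x) (.inr y) ↔ σ i x = y := by
    intro i x y
    constructor
    · intro h
      exact ((hEx i x).choose_spec.2 y h).symm
    · rintro rfl
      exact (hEx i x).choose_spec.1
  have hadj' : ∀ i (z y : Fin n), (M i).Adj (.inr z) (.inl y) ↔ σ i y = z := by
    intro i z y
    rw [(M i).adj_comm]
    exact hadj i y z
  -- matrix entries
  have hentry : ∀ i j (x y : Fin n),
      ((M i).adjMatrix ℝ * (M j).adjMatrix ℝ) (.inl x) (.inl y)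
        = if σ j y = σ i x then 1 else 0 := by
    intro i j x y
    rw [Matrix.mul_apply, Fintype.sum_sum_type]
    simp only [SimpleGraph.adjMatrix_apply]
    rw [Finset.sum_congr rfl (fun z _ => by rw [if_neg (hll i x z), zero_mul]),
      Finset.sum_const_zero, zero_add,
      Finset.sum_congr rfl (fun z _ => by
        rw [if_congr (hadj i x z) rfl rfl, if_congr (hadj' j z y) rfl rfl, ite_mul, zero_mul,
          one_mul]),
      Finset.sum_ite_eq]
    simp
  have hkey : ∀ i j (x y : Fin n), σ j y = σ i x ↔ σ i y = σ j x := by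
    intro i j x y
    have h2 : ((M i).adjMatrix ℝ * (M j).adjMatrix ℝ) (.inl x) (.inl y)
        = ((M j).adjMatrix ℝ * (M i).adjMatrix ℝ) (.inl x) (.inl y) := by
      rw [(hcomm i j).eq]
    rw [hentry i j x y, hentry j i x y] at h2
    exact iff_of_ite_eq h2
  have hrel : ∀ i j (x : Fin n), σ i ((σ j)⁻¹ (σ i x)) = σ j x := by
    intro i j x
    exact (hkey i j x ((σ j)⁻¹ (σ i x))).mp ((show ∀ (f : Equiv.Perm (Fin n)) (x : Fin n), f (f⁻¹ x) = x from fun f x => f.apply_symm_apply x) _ _)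
  have hrel' : ∀ i j (z : Fin n), σ i ((σ j)⁻¹ z) = σ j ((σ i)⁻¹ z) := by
    intro i j z
    have := hrel i j ((σ i)⁻¹ z)
    rwa [(show ∀ (f : Equiv.Perm (Fin n)) (x : Fin n), f (f⁻¹ x) = x from fun f x => f.apply_symm_apply x)] at this
  -- base index
  set x₀ : Fin n := ⟨0, hn⟩ with hx₀
  have hmem : s(Sum.inl x₀, Sum.inr x₀) ∈ ⋃ i, (M i).edgeSet := by
    rw [hunion]; simp
  rw [Set.mem_iUnion] at hmem
  obtain ⟨i₀, -⟩ := hmem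
  set ρ : Fin k → Equiv.Perm (Fin n) := fun i => (σ i₀)⁻¹ * σ i with hρ
  have hρ2 : ∀ i, ρ i * ρ i = 1 := by
    intro i
    ext x
    simp only [hρ, Equiv.Perm.mul_apply, Equiv.Perm.one_apply]
    rw [hrel i i₀ x, (show ∀ (f : Equiv.Perm (Fin n)) (x : Fin n), f⁻¹ (f x) = x from fun f x => f.symm_apply_apply x)]
  have hρmul : ∀ i j (x : Fin n), (ρ i * ρ j) x = (σ i)⁻¹ (σ j x) := by
    intro i j x
    simp only [hρ, Equiv.Perm.mul_apply]
    rw [hrel' i i₀ (σ j x), (show ∀ (f : Equiv.Perm (Fin n)) (x : Fin n), f⁻¹ (f x) = x from fun f x => f.symm_apply_apply x)]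
  have hρc : ∀ i j, Commute (ρ i) (ρ j) := by
    intro i j
    unfold Commute SemiconjBy
    ext x
    rw [hρmul i j x, hρmul j i x]
    have h1 : σ j ((σ i)⁻¹ (σ j x)) = σ i x :=
      (hkey i j x ((σ i)⁻¹ (σ j x))).mpr ((show ∀ (f : Equiv.Perm (Fin n)) (x : Fin n), f (f⁻¹ x) = x from fun f x => f.apply_symm_apply x) _ _)
    rw [← h1, (show ∀ (f : Equiv.Perm (Fin n)) (x : Fin n), f⁻¹ (f x) = x from fun f x => f.symm_apply_apply x)]
  have hsurj : ∀ y : Fin n, ∃ i, ρ i x₀ = y := by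
    intro y
    have hm : s(Sum.inl x₀, Sum.inr (σ i₀ y)) ∈ ⋃ i, (M i).edgeSet := by
      rw [hunion]; simp
    rw [Set.mem_iUnion] at hm
    obtain ⟨i, hi⟩ := hm
    rw [SimpleGraph.mem_edgeSet, hadj] at hi
    refine ⟨i, ?_⟩
    simp only [hρ, Equiv.Perm.mul_apply]
    rw [hi, (show ∀ (f : Equiv.Perm (Fin n)) (x : Fin n), f⁻¹ (f x) = x from fun f x => f.symm_apply_apply x)]
  -- the group generated by the ρ's
  set Γ : Subgroup (Equiv.Perm (Fin n)) := Subgroup.closure (Set.range ρ) with hΓ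
  have hcent : ∀ g ∈ Γ, ∀ i, Commute g (ρ i) := by
    intro g hg
    refine Subgroup.closure_induction (p := fun g _ => ∀ i, Commute g (ρ i))
      ?_ ?_ ?_ ?_ hg
    · rintro x ⟨j, rfl⟩ i
      exact hρc j i
    · intro i; exact Commute.one_left _
    · intro x y hx hy px py i
      exact (px i).mul_left (py i)
    · intro x hx px i
      exact (px i).inv_left
  have habel : ∀ g ∈ Γ, ∀ h ∈ Γ, Commute g h := by
    intro g hg h hh
    refine Subgroup.closure_induction (p := fun h _ => Commute g h) ?_ ?_ ?_ ?_ hh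
    · rintro x ⟨j, rfl⟩
      exact hcent g hg j
    · exact Commute.one_right _
    · intro x y hx hy px py
      exact px.mul_right py
    · intro x hx px
      exact px.inv_right
  have hsq : ∀ g ∈ Γ, g * g = 1 := by
    intro g hg
    refine Subgroup.closure_induction (p := fun g _ => g * g = 1) ?_ ?_ ?_ ?_ hg
    · rintro x ⟨j, rfl⟩
      exact hρ2 j
    · exact one_mul 1
    · intro x y hx hy px py
      have cxy : Commute x y := habel x hx y hy
      have : x * y * (x * y) = x * x * (y * y) := by
        rw [mul_assoc, ← mul_assoc y x, ← cxy.eq, mul_assoc x y, ← mul_assoc]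
      rw [this, px, py, one_mul]
    · intro x hx px
      rw [inv_eq_of_mul_eq_one_right px]
      exact px
  -- card of Γ is a power of 2 and n divides it
  have hprime : ∀ p : ℕ, p.Prime → p ∣ Fintype.card ↥Γ → p = 2 := by
    intro p hp hdvd
    haveI := Fact.mk hp
    obtain ⟨g, hg⟩ := exists_prime_orderOf_dvd_card p hdvd
    have hg2 : g ^ 2 = 1 := by
      rw [pow_two]
      apply Subtype.ext
      push_cast
      exact hsq g.1 g.2
    have : orderOf g ∣ 2 := orderOf_dvd_of_pow_eq_one hg2
    rw [hg] at this
    exact (Nat.prime_dvd_prime_iff_eq hp Nat.prime_two).mp this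
  have horb : MulAction.orbit ↥Γ x₀ = Set.univ := by
    apply Set.eq_univ_of_forall
    intro y
    obtain ⟨i, hi⟩ := hsurj y
    exact ⟨⟨ρ i, Subgroup.subset_closure ⟨i, rfl⟩⟩, hi⟩
  have hdvd : n ∣ Fintype.card ↥Γ := by
    have := MulAction.card_orbit_mul_card_stabilizer_eq_card_group ↥Γ x₀
    rw [← this]
    have hcardorb : Fintype.card ↥(MulAction.orbit ↥Γ x₀) = n := by
      have e1 : ↥(MulAction.orbit ↥Γ x₀) ≃ (Fin n) := by
        rw [horb]
        exact Equiv.Set.univ (Fin n)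
      rw [Fintype.card_congr e1, Fintype.card_fin]
    rw [hcardorb]
    exact Dvd.intro _ rfl
  have hnd : ∀ {d : ℕ}, d.Prime → d ∣ n → d = 2 := by
    intro d hd hdn
    exact hprime d hd (hdn.trans hdvd)
  exact ⟨_, Nat.eq_prime_pow_of_unique_prime_dvd (by omega) hnd⟩

end Stmt12Aux

/-- A finite simple graph `G` is *decomposable into commuting perfect matchings* if its edge
set can be partitioned into perfect matchings (sets of pairwise vertex-disjoint edges covering
every vertex, i.e. each vertex is matched to exactly one vertex) whose adjacency matrices
(over `ℝ`) pairwise commute. -/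
def DecomposableIntoCommutingPerfectMatchings {V : Type*} [Fintype V] [DecidableEq V]
    (G : SimpleGraph V) : Prop :=
  ∃ (k : ℕ) (M : Fin k → SimpleGraph V),
    (∀ i, M i ≤ G) ∧
    (∀ i, ∀ v : V, ∃! w : V, (M i).Adj v w) ∧
    (∀ i j, i ≠ j → Disjoint (M i).edgeSet (M j).edgeSet) ∧
    (⋃ i, (M i).edgeSet) = G.edgeSet ∧
    (∀ i j, Commute ((M i).adjMatrix ℝ) ((M j).adjMatrix ℝ))

/-- For `n ≥ 1`, the complete bipartite graph `K_{n,n}` is decomposable into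
commuting perfect matchings if and only if `n` is a power of `2`. -/
theorem stmt_12 (n : ℕ) (hn : 1 ≤ n) :
    DecomposableIntoCommutingPerfectMatchings
        (completeBipartiteGraph (Fin n) (Fin n)) ↔
      ∃ m : ℕ, n = 2 ^ m := by
  constructor
  · rintro ⟨k, M, hle, huniq, -, hunion, hcomm⟩
    exact Stmt12Aux.pow_of_decomposable n hn k M hle huniq hunion hcomm
  · rintro ⟨m, hm⟩
    exact Stmt12Aux.decomposable_of_pow n m hm
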